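/- Let N ≥ 1 and let k be a field containing a primitive N-th root of unity q (so N is invertible in k). In the group Hopf algebra k[ℤ/N], let K denote the group-like basis element corresponding to the generator 1 of ℤ/N, and set R = N^{−1}·Σ_{i,j=0}^{N−1} q^{−ij}·(K^i ⊗ K^j) in k[ℤ/N] ⊗_k k[ℤ/N]. Then: (a) R is invertible with inverse N^{−1}·Σ_{i,j=0}^{N−1} q^{ij}·(K^i ⊗ K^j); (b) (Δ ⊗ id)(R) = R₁₃·R₂₃ and (id ⊗ Δ)(R) = R₁₃·R₁₂ in the triple tensor product k[ℤ/N]^{⊗3}. Here Δ is the comultiplication of the group Hopf algebra (Δ(K^i) = K^i ⊗ K^i), and R₁₂ = N^{−1}Σ q^{−ij} K^i ⊗ K^j ⊗ 1, R₁₃ = N^{−1}Σ q^{−ij} K^i ⊗ 1 ⊗ K^j, R₂₃ = N^{−1}Σ q^{−ij} 1 ⊗ K^i ⊗ K^j. Hence R is a universal R-matrix making k[ℤ/N] quasi-triangular. -/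

import Mathlib

open TensorProduct Finset

noncomputable section

/-- The group algebra `k[ℤ/N]`. -/
abbrev GA (k : Type*) [Field k] (N : ℕ) := MonoidAlgebra k (Multiplicative (ZMod N))

/-- The group-like basis element `K` corresponding to the generator `1` of `ℤ/N`. -/
def Kgen (k : Type*) [Field k] (N : ℕ) : GA k N :=
  MonoidAlgebra.of k (Multiplicative (ZMod N)) (Multiplicative.ofAdd (1 : ZMod N))

/-- The candidate universal R-matrix `R = N⁻¹ ∑_{i,j} q^{−ij} K^i ⊗ K^j`. -/
def Rmat (k : Type*) [Field k] (N : ℕ) (q : k) : GA k N ⊗[k] GA k N :=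
  (N : k)⁻¹ • ∑ i ∈ range N, ∑ j ∈ range N,
    q⁻¹ ^ (i * j) • ((Kgen k N ^ i) ⊗ₜ[k] (Kgen k N ^ j))

namespace RmatAux

variable {k : Type*} [Field k] {N : ℕ} {q : k}

/-- Powers of `K` indexed by `ZMod N`. -/
def Kp (k : Type*) [Field k] (N : ℕ) (z : ZMod N) : GA k N := Kgen k N ^ z.val

/-- The character `z ↦ q^z`. -/
def chi (N : ℕ) (q : k) (z : ZMod N) : k := q ^ z.val

section basic
set_option linter.unusedSectionVars false
variable [NeZero N]

def eId (k : Type*) [Field k] (N : ℕ) (q : k) [NeZero N] (a : ZMod N) : GA k N :=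
  (N : k)⁻¹ • ∑ z : ZMod N, chi N q (-(a * z)) • Kp k N z

lemma Kgen_pow_N : Kgen k N ^ N = 1 := by
  rw [Kgen, ← map_pow, ← ofAdd_nsmul]
  simp [MonoidAlgebra.one_def]

lemma Kgen_pow (m : ℕ) : Kgen k N ^ m = Kp k N (m : ZMod N) := by
  rw [Kp, ZMod.val_natCast]
  conv_lhs => rw [← Nat.div_add_mod m N]
  rw [pow_add, pow_mul, Kgen_pow_N, one_pow, one_mul]

lemma Kp_add (a b : ZMod N) : Kp k N (a + b) = Kp k N a * Kp k N b := by
  have : ((a.val + b.val : ℕ) : ZMod N) = a + b := by push_cast [ZMod.natCast_val]; simp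
  rw [← this, ← Kgen_pow, pow_add, Kp, Kp]

lemma Kp_zero : Kp k N 0 = 1 := by simp [Kp]

lemma chi_natCast (hq1 : q ^ N = 1) (m : ℕ) : chi N q (m : ZMod N) = q ^ m := by
  rw [chi, ZMod.val_natCast]
  conv_rhs => rw [← Nat.div_add_mod m N]
  rw [pow_add, pow_mul, hq1, one_pow, one_mul]

lemma chi_add (hq1 : q ^ N = 1) (a b : ZMod N) :
    chi N q (a + b) = chi N q a * chi N q b := by
  have : ((a.val + b.val : ℕ) : ZMod N) = a + b := by push_cast [ZMod.natCast_val]; simp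
  rw [← this, chi_natCast hq1, pow_add, chi, chi]

lemma chi_zero : chi N q 0 = 1 := by simp [chi]

lemma chi_mul_chi_neg (hq1 : q ^ N = 1) (a : ZMod N) :
    chi N q a * chi N q (-a) = 1 := by
  rw [← chi_add hq1, add_neg_cancel, chi_zero]

lemma chi_neg (hq1 : q ^ N = 1) (a : ZMod N) : chi N q (-a) = (chi N q a)⁻¹ :=
  eq_inv_of_mul_eq_one_right (by rw [← chi_add hq1, add_neg_cancel, chi_zero])

/-- Reindexing sums over `range N` to sums over `ZMod N`. -/
lemma sum_zmod {M : Type*} [AddCommMonoid M] (f : ZMod N → M) :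
    ∑ i ∈ range N, f (i : ZMod N) = ∑ z : ZMod N, f z := by
  exact Finset.sum_nbij' (fun i => (i : ZMod N)) (fun z => z.val)
    (fun a _ => Finset.mem_univ _)
    (fun z _ => Finset.mem_range.mpr (ZMod.val_lt z))
    (fun a ha => ZMod.val_cast_of_lt (Finset.mem_range.mp ha))
    (fun z _ => ZMod.natCast_rightInverse z)
    (fun a _ => rfl)

lemma chi_pow (hq1 : q ^ N = 1) (c z : ZMod N) :
    chi N q (c * z) = chi N q c ^ z.val := by
  have : ((c.val * z.val : ℕ) : ZMod N) = c * z := by push_cast [ZMod.natCast_val]; simp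
  rw [← this, chi_natCast hq1, pow_mul, chi]

/-- Orthogonality. -/
lemma orth (hq1 : q ^ N = 1) (hq2 : ∀ j : ℕ, 1 ≤ j → j < N → q ^ j ≠ 1) (c : ZMod N) :
    ∑ z : ZMod N, chi N q (c * z) = if c = 0 then (N : k) else 0 := by
  have h1 : ∑ z : ZMod N, chi N q (c * z) = ∑ i ∈ range N, chi N q c ^ i := by
    rw [← sum_zmod (fun z => chi N q (c * z))]
    exact Finset.sum_congr rfl fun i hi => by
      rw [chi_pow hq1, ZMod.val_cast_of_lt (Finset.mem_range.mp hi)]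
  rw [h1]
  by_cases hc : c = 0
  · simp [hc, chi_zero]
  · rw [if_neg hc]
    have hne : chi N q c ≠ 1 := by
      apply hq2 c.val _ (ZMod.val_lt c)
      have := (ZMod.val_eq_zero c).not.mpr hc
      omega
    have hpow : chi N q c ^ N = 1 := by
      rw [chi, ← pow_mul, mul_comm, pow_mul, hq1, one_pow]
    rw [geom_sum_eq hne, hpow, sub_self, zero_div]


lemma isPrimRoot (hq1 : q ^ N = 1) (hq2 : ∀ j : ℕ, 1 ≤ j → j < N → q ^ j ≠ 1) :
    IsPrimitiveRoot q N := by
  constructor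
  · exact hq1
  · intro l hl
    rcases Nat.eq_zero_or_pos (l % N) with h | h
    · exact Nat.dvd_of_mod_eq_zero h
    · exfalso
      apply hq2 (l % N) h (Nat.mod_lt _ (Nat.pos_of_neZero N))
      calc q ^ (l % N) = q ^ (N * (l / N)) * q ^ (l % N) := by
            rw [pow_mul, hq1, one_pow, one_mul]
        _ = q ^ l := by rw [← pow_add, Nat.div_add_mod]
        _ = 1 := hl

lemma Nk_ne_zero (hq1 : q ^ N = 1) (hq2 : ∀ j : ℕ, 1 ≤ j → j < N → q ^ j ≠ 1) :
    (N : k) ≠ 0 :=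
  ((isPrimRoot hq1 hq2).neZero').out

variable (hq1 : q ^ N = 1) (hq2 : ∀ j : ℕ, 1 ≤ j → j < N → q ^ j ≠ 1)

section eProps
include hq1 hq2

lemma e_mul (a b : ZMod N) :
    eId k N q a * eId k N q b = if a = b then eId k N q a else 0 := by
  have hNk := Nk_ne_zero hq1 hq2
  rw [eId, eId, smul_mul_smul_comm, Finset.sum_mul_sum]
  have h2 : ∀ z : ZMod N,
      ∑ w : ZMod N, (chi N q (-(a * z)) • Kp k N z) * (chi N q (-(b * w)) • Kp k N w)
      = ∑ t : ZMod N, (chi N q ((b - a) * z) * chi N q (-(b * t))) • Kp k N t := by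
    intro z
    apply Fintype.sum_equiv (Equiv.addLeft z)
    intro w
    rw [Equiv.coe_addLeft, smul_mul_smul_comm, ← Kp_add, ← chi_add hq1, ← chi_add hq1]
    congr 2
    ring
  simp only [h2]
  rw [Finset.sum_comm]
  have h3 : ∀ t : ZMod N,
      ∑ z : ZMod N, (chi N q ((b - a) * z) * chi N q (-(b * t))) • Kp k N t
      = (if b - a = 0 then (N : k) else 0) • (chi N q (-(b * t)) • Kp k N t) := by
    intro t
    simp only [mul_smul]
    rw [← Finset.sum_smul, orth hq1 hq2]
  simp only [h3]
  by_cases hab : a = b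
  · subst hab
    simp only [sub_self, if_pos rfl, if_true]
    rw [← Finset.smul_sum, smul_smul]
    show _ = (N : k)⁻¹ • ∑ z : ZMod N, chi N q (-(a * z)) • Kp k N z
    congr 1
    field_simp
  · rw [if_neg hab, if_neg (sub_ne_zero.mpr (Ne.symm hab))]
    simp

lemma e_sum : ∑ a : ZMod N, eId k N q a = 1 := by
  have hNk := Nk_ne_zero hq1 hq2
  simp only [eId]
  rw [← Finset.smul_sum, Finset.sum_comm]
  have h1 : ∀ z : ZMod N,
      ∑ a : ZMod N, chi N q (-(a * z)) • Kp k N z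
      = (if -z = 0 then (N : k) else 0) • Kp k N z := by
    intro z
    rw [← Finset.sum_smul]
    congr 1
    rw [← orth hq1 hq2 (-z)]
    apply Finset.sum_congr rfl
    intro a _
    congr 1
    ring
  simp only [h1, neg_eq_zero, ite_smul, zero_smul]
  rw [Finset.sum_ite_eq' Finset.univ (0 : ZMod N) (fun z => (N : k) • Kp k N z)]
  simp [Kp_zero, smul_smul, inv_mul_cancel₀ hNk]


omit hq2 in
lemma qinv_pow (i j : ℕ) :
    q⁻¹ ^ (i * j) = chi N q (-((i : ZMod N) * (j : ZMod N))) := by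
  rw [chi_neg hq1, inv_pow]
  congr 1
  rw [← Nat.cast_mul, chi_natCast hq1]

omit hq2 in
lemma qpow (i j : ℕ) :
    q ^ (i * j) = chi N q ((i : ZMod N) * (j : ZMod N)) := by
  rw [← Nat.cast_mul, chi_natCast hq1]

omit hq2 in
lemma conv {M : Type*} [AddCommMonoid M] [Module k M]
    (T : GA k N →ₗ[k] GA k N →ₗ[k] M) :
    (N : k)⁻¹ • ∑ i ∈ range N, ∑ j ∈ range N,
        q⁻¹ ^ (i * j) • T (Kgen k N ^ i) (Kgen k N ^ j)
      = ∑ a : ZMod N, T (Kp k N a) (eId k N q a) := by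
  have h1 : ∀ a : ZMod N, T (Kp k N a) (eId k N q a)
      = (N : k)⁻¹ • ∑ z : ZMod N, chi N q (-(a * z)) • T (Kp k N a) (Kp k N z) := by
    intro a
    rw [eId, map_smul, map_sum]
    simp only [map_smul]
  simp only [h1]
  rw [← Finset.smul_sum]
  congr 1
  have h2 : ∀ i j : ℕ, q⁻¹ ^ (i * j) • T (Kgen k N ^ i) (Kgen k N ^ j)
      = chi N q (-((i : ZMod N) * (j : ZMod N)))
          • T (Kp k N (i : ZMod N)) (Kp k N (j : ZMod N)) := by
    intro i j
    rw [qinv_pow hq1, Kgen_pow, Kgen_pow]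
  simp only [h2]
  rw [sum_zmod (fun a => ∑ j ∈ range N,
    chi N q (-(a * (j : ZMod N))) • T (Kp k N a) (Kp k N (j : ZMod N)))]
  exact Finset.sum_congr rfl fun a _ =>
    sum_zmod (fun z => chi N q (-(a * z)) • T (Kp k N a) (Kp k N z))

omit hq2 in
lemma conv' {M : Type*} [AddCommMonoid M] [Module k M]
    (T : GA k N →ₗ[k] GA k N →ₗ[k] M) :
    (N : k)⁻¹ • ∑ i ∈ range N, ∑ j ∈ range N,
        q ^ (i * j) • T (Kgen k N ^ i) (Kgen k N ^ j)
      = ∑ a : ZMod N, T (Kp k N a) (eId k N q (-a)) := by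
  have h1 : ∀ a : ZMod N, T (Kp k N a) (eId k N q (-a))
      = (N : k)⁻¹ • ∑ z : ZMod N, chi N q (a * z) • T (Kp k N a) (Kp k N z) := by
    intro a
    rw [eId, map_smul, map_sum]
    simp only [map_smul, neg_mul, neg_neg]
  simp only [h1]
  rw [← Finset.smul_sum]
  congr 1
  have h2 : ∀ i j : ℕ, q ^ (i * j) • T (Kgen k N ^ i) (Kgen k N ^ j)
      = chi N q ((i : ZMod N) * (j : ZMod N))
          • T (Kp k N (i : ZMod N)) (Kp k N (j : ZMod N)) := by
    intro i j
    rw [qpow hq1, Kgen_pow, Kgen_pow]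
  simp only [h2]
  rw [sum_zmod (fun a => ∑ j ∈ range N,
    chi N q (a * (j : ZMod N)) • T (Kp k N a) (Kp k N (j : ZMod N)))]
  exact Finset.sum_congr rfl fun a _ =>
    sum_zmod (fun z => chi N q (a * z) • T (Kp k N a) (Kp k N z))

variable (Δ : GA k N →ₐ[k] GA k N ⊗[k] GA k N)
  (hΔ : ∀ g : Multiplicative (ZMod N),
      Δ (MonoidAlgebra.of k (Multiplicative (ZMod N)) g)
        = (MonoidAlgebra.of k (Multiplicative (ZMod N)) g)
            ⊗ₜ[k] (MonoidAlgebra.of k (Multiplicative (ZMod N)) g))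

omit hq1 hq2 in
include hΔ in
lemma delta_Kp (a : ZMod N) : Δ (Kp k N a) = Kp k N a ⊗ₜ[k] Kp k N a := by
  rw [Kp, map_pow, Kgen, hΔ, Algebra.TensorProduct.tmul_pow]

include hΔ in
lemma delta_e (a : ZMod N) :
    Δ (eId k N q a) = ∑ b : ZMod N, eId k N q b ⊗ₜ[k] eId k N q (a - b) := by
  have hNk := Nk_ne_zero hq1 hq2
  have lhs : Δ (eId k N q a)
      = (N : k)⁻¹ • ∑ z : ZMod N, chi N q (-(a * z)) • (Kp k N z ⊗ₜ[k] Kp k N z) := by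
    rw [eId, map_smul, map_sum]
    simp only [map_smul, delta_Kp Δ hΔ]
  have key : ∀ b : ZMod N, eId k N q b ⊗ₜ[k] eId k N q (a - b)
      = ((N : k)⁻¹ * (N : k)⁻¹) • ∑ z : ZMod N, ∑ w : ZMod N,
          (chi N q (-(b * z)) * chi N q (-((a - b) * w))) • (Kp k N z ⊗ₜ[k] Kp k N w) := by
    intro b
    rw [eId, eId, ← smul_tmul', tmul_smul, smul_smul, sum_tmul]
    congr 1
    apply Finset.sum_congr rfl
    intro z _
    rw [← smul_tmul', tmul_sum, Finset.smul_sum]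
    apply Finset.sum_congr rfl
    intro w _
    rw [tmul_smul, smul_smul]
  rw [lhs]
  simp only [key]
  rw [← Finset.smul_sum]
  have hc : ∀ b z w : ZMod N, chi N q (-(b * z)) * chi N q (-((a - b) * w))
      = chi N q ((w - z) * b) * chi N q (-(a * w)) := by
    intro b z w
    rw [← chi_add hq1, ← chi_add hq1]
    congr 1
    ring
  calc (N : k)⁻¹ • ∑ z : ZMod N, chi N q (-(a * z)) • (Kp k N z ⊗ₜ[k] Kp k N z)
      = ((N : k)⁻¹ * (N : k)⁻¹) • ∑ z : ZMod N,
          ((N : k) • (chi N q (-(a * z)) • (Kp k N z ⊗ₜ[k] Kp k N z))) := by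
        rw [← Finset.smul_sum, smul_smul]
        congr 1
        field_simp
    _ = ((N : k)⁻¹ * (N : k)⁻¹) • ∑ z : ZMod N, ∑ w : ZMod N,
          (if w = z then ((N : k) • (chi N q (-(a * w)) • (Kp k N z ⊗ₜ[k] Kp k N w))) else 0) := by
        congr 1
        apply Finset.sum_congr rfl
        intro z _
        rw [Fintype.sum_ite_eq' z
          (fun w => (N : k) • (chi N q (-(a * w)) • (Kp k N z ⊗ₜ[k] Kp k N w)))]
    _ = ((N : k)⁻¹ * (N : k)⁻¹) • ∑ z : ZMod N, ∑ w : ZMod N, ∑ b : ZMod N,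
          (chi N q (-(b * z)) * chi N q (-((a - b) * w))) • (Kp k N z ⊗ₜ[k] Kp k N w) := by
        congr 1
        apply Finset.sum_congr rfl
        intro z _
        apply Finset.sum_congr rfl
        intro w _
        symm
        simp only [hc, mul_smul]
        rw [← Finset.sum_smul, orth hq1 hq2]
        simp only [sub_eq_zero, ite_smul, zero_smul]
    _ = ((N : k)⁻¹ * (N : k)⁻¹) • ∑ b : ZMod N, ∑ z : ZMod N, ∑ w : ZMod N,
          (chi N q (-(b * z)) * chi N q (-((a - b) * w))) • (Kp k N z ⊗ₜ[k] Kp k N w) := by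
        congr 1
        calc ∑ z : ZMod N, ∑ w : ZMod N, ∑ b : ZMod N,
              (chi N q (-(b * z)) * chi N q (-((a - b) * w))) • (Kp k N z ⊗ₜ[k] Kp k N w)
            = ∑ z : ZMod N, ∑ b : ZMod N, ∑ w : ZMod N,
              (chi N q (-(b * z)) * chi N q (-((a - b) * w))) • (Kp k N z ⊗ₜ[k] Kp k N w) :=
              Finset.sum_congr rfl fun z _ => Finset.sum_comm
          _ = ∑ b : ZMod N, ∑ z : ZMod N, ∑ w : ZMod N,
              (chi N q (-(b * z)) * chi N q (-((a - b) * w))) • (Kp k N z ⊗ₜ[k] Kp k N w) :=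
              Finset.sum_comm

end eProps
end basic
end RmatAux

set_option maxHeartbeats 1000000 in
open RmatAux in
/-- for a primitive `N`-th root of unity `q`,
`R = N⁻¹ ∑ q^{−ij} K^i ⊗ K^j` is invertible with inverse `N⁻¹ ∑ q^{ij} K^i ⊗ K^j`, and
satisfies `(Δ ⊗ id)(R) = R₁₃ R₂₃` and `(id ⊗ Δ)(R) = R₁₃ R₁₂`, where `Δ` is the
comultiplication of the group Hopf algebra `k[ℤ/N]` (so `Δ(K^i) = K^i ⊗ K^i`); hence `R`
is a universal R-matrix making `k[ℤ/N]` quasi-triangular. -/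
theorem groupAlgebra_R_matrix
    (N : ℕ) (hN : 1 ≤ N) (k : Type*) [Field k] (q : k)
    (hq1 : q ^ N = 1) (hq2 : ∀ j : ℕ, 1 ≤ j → j < N → q ^ j ≠ 1)
    (Δ : GA k N →ₐ[k] GA k N ⊗[k] GA k N)
    (hΔ : ∀ g : Multiplicative (ZMod N),
      Δ (MonoidAlgebra.of k (Multiplicative (ZMod N)) g)
        = (MonoidAlgebra.of k (Multiplicative (ZMod N)) g)
            ⊗ₜ[k] (MonoidAlgebra.of k (Multiplicative (ZMod N)) g)) :
    (Rmat k N q * ((N : k)⁻¹ • ∑ i ∈ range N, ∑ j ∈ range N,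
        q ^ (i * j) • ((Kgen k N ^ i) ⊗ₜ[k] (Kgen k N ^ j))) = 1 ∧
     ((N : k)⁻¹ • ∑ i ∈ range N, ∑ j ∈ range N,
        q ^ (i * j) • ((Kgen k N ^ i) ⊗ₜ[k] (Kgen k N ^ j))) * Rmat k N q = 1) ∧
    (Algebra.TensorProduct.map Δ (AlgHom.id k (GA k N)) (Rmat k N q)
        = ((N : k)⁻¹ • ∑ i ∈ range N, ∑ j ∈ range N,
            q⁻¹ ^ (i * j) • (((Kgen k N ^ i) ⊗ₜ[k] (1 : GA k N)) ⊗ₜ[k] (Kgen k N ^ j)))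
          * ((N : k)⁻¹ • ∑ i ∈ range N, ∑ j ∈ range N,
            q⁻¹ ^ (i * j) • (((1 : GA k N) ⊗ₜ[k] (Kgen k N ^ i)) ⊗ₜ[k] (Kgen k N ^ j)))) ∧
    (Algebra.TensorProduct.map (AlgHom.id k (GA k N)) Δ (Rmat k N q)
        = ((N : k)⁻¹ • ∑ i ∈ range N, ∑ j ∈ range N,
            q⁻¹ ^ (i * j) • ((Kgen k N ^ i) ⊗ₜ[k] ((1 : GA k N) ⊗ₜ[k] (Kgen k N ^ j))))
          * ((N : k)⁻¹ • ∑ i ∈ range N, ∑ j ∈ range N,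
            q⁻¹ ^ (i * j) • ((Kgen k N ^ i) ⊗ₜ[k] ((Kgen k N ^ j) ⊗ₜ[k] (1 : GA k N))))) := by
  have hNZ : NeZero N := ⟨by omega⟩
  have hR : Rmat k N q = ∑ a : ZMod N, Kp k N a ⊗ₜ[k] eId k N q a :=
    conv hq1 (TensorProduct.mk k (GA k N) (GA k N))
  have hR' : ((N : k)⁻¹ • ∑ i ∈ range N, ∑ j ∈ range N,
      q ^ (i * j) • ((Kgen k N ^ i) ⊗ₜ[k] (Kgen k N ^ j)))
      = ∑ a : ZMod N, Kp k N a ⊗ₜ[k] eId k N q (-a) :=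
    conv' hq1 (TensorProduct.mk k (GA k N) (GA k N))
  have hRR' : (∑ a : ZMod N, Kp k N a ⊗ₜ[k] eId k N q a) *
      (∑ a : ZMod N, Kp k N a ⊗ₜ[k] eId k N q (-a)) = 1 := by
    rw [Finset.sum_mul_sum]
    have h : ∀ a b : ZMod N,
        (Kp k N a ⊗ₜ[k] eId k N q a) * (Kp k N b ⊗ₜ[k] eId k N q (-b))
        = if b = -a then (Kp k N a * Kp k N b) ⊗ₜ[k] eId k N q a else 0 := by
      intro a b
      rw [Algebra.TensorProduct.tmul_mul_tmul, e_mul hq1 hq2]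
      by_cases hab : a = -b
      · rw [if_pos hab, if_pos (by rw [hab]; simp)]
      · rw [if_neg hab, if_neg (fun hba => hab (by rw [hba]; simp)), tmul_zero]
    simp only [h]
    rw [Finset.sum_congr rfl (fun a _ => Fintype.sum_ite_eq' (-a)
      (fun b => (Kp k N a * Kp k N b) ⊗ₜ[k] eId k N q a))]
    have h2 : ∀ a : ZMod N, Kp k N a * Kp k N (-a) = 1 := by
      intro a; rw [← Kp_add, add_neg_cancel, Kp_zero]
    simp only [h2]
    rw [← tmul_sum, e_sum hq1 hq2, Algebra.TensorProduct.one_def]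
  refine ⟨⟨?_, ?_⟩, ?_, ?_⟩
  · rw [hR, hR']
    exact hRR'
  · rw [hR, hR', mul_comm]
    exact hRR'
  · have hA : ((N : k)⁻¹ • ∑ i ∈ range N, ∑ j ∈ range N,
        q⁻¹ ^ (i * j) • (((Kgen k N ^ i) ⊗ₜ[k] (1 : GA k N)) ⊗ₜ[k] (Kgen k N ^ j)))
        = ∑ a : ZMod N, (Kp k N a ⊗ₜ[k] (1 : GA k N)) ⊗ₜ[k] eId k N q a :=
      conv hq1 ((TensorProduct.mk k (GA k N ⊗[k] GA k N) (GA k N)).comp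
        ((TensorProduct.mk k (GA k N) (GA k N)).flip 1))
    have hB : ((N : k)⁻¹ • ∑ i ∈ range N, ∑ j ∈ range N,
        q⁻¹ ^ (i * j) • (((1 : GA k N) ⊗ₜ[k] (Kgen k N ^ i)) ⊗ₜ[k] (Kgen k N ^ j)))
        = ∑ a : ZMod N, ((1 : GA k N) ⊗ₜ[k] Kp k N a) ⊗ₜ[k] eId k N q a :=
      conv hq1 ((TensorProduct.mk k (GA k N ⊗[k] GA k N) (GA k N)).comp
        (TensorProduct.mk k (GA k N) (GA k N) 1))
    rw [hR, map_sum]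
    simp only [Algebra.TensorProduct.map_tmul, AlgHom.coe_id, id_eq, delta_Kp Δ hΔ]
    rw [hA, hB]
    refine Eq.trans ?_ (Finset.sum_mul_sum univ univ _ _).symm
    have h : ∀ a b : ZMod N,
        ((Kp k N a ⊗ₜ[k] (1 : GA k N)) ⊗ₜ[k] eId k N q a) *
          (((1 : GA k N) ⊗ₜ[k] Kp k N b) ⊗ₜ[k] eId k N q b)
        = if b = a then (Kp k N a ⊗ₜ[k] Kp k N b) ⊗ₜ[k] eId k N q a else 0 := by
      intro a b
      rw [Algebra.TensorProduct.tmul_mul_tmul, Algebra.TensorProduct.tmul_mul_tmul,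
        e_mul hq1 hq2, mul_one, one_mul]
      by_cases hab : a = b
      · rw [if_pos hab, if_pos hab.symm]
      · rw [if_neg hab, if_neg (Ne.symm hab), tmul_zero]
    simp only [h]
    rw [Finset.sum_congr rfl (fun a _ => Fintype.sum_ite_eq' a
      (fun b => (Kp k N a ⊗ₜ[k] Kp k N b) ⊗ₜ[k] eId k N q a))]
  · have hC : ((N : k)⁻¹ • ∑ i ∈ range N, ∑ j ∈ range N,
        q⁻¹ ^ (i * j) • ((Kgen k N ^ i) ⊗ₜ[k] ((1 : GA k N) ⊗ₜ[k] (Kgen k N ^ j))))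
        = ∑ a : ZMod N, Kp k N a ⊗ₜ[k] ((1 : GA k N) ⊗ₜ[k] eId k N q a) :=
      conv hq1 ((TensorProduct.mk k (GA k N) (GA k N ⊗[k] GA k N)).compl₂
        (TensorProduct.mk k (GA k N) (GA k N) 1))
    have hD : ((N : k)⁻¹ • ∑ i ∈ range N, ∑ j ∈ range N,
        q⁻¹ ^ (i * j) • ((Kgen k N ^ i) ⊗ₜ[k] ((Kgen k N ^ j) ⊗ₜ[k] (1 : GA k N))))
        = ∑ a : ZMod N, Kp k N a ⊗ₜ[k] (eId k N q a ⊗ₜ[k] (1 : GA k N)) :=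
      conv hq1 ((TensorProduct.mk k (GA k N) (GA k N ⊗[k] GA k N)).compl₂
        ((TensorProduct.mk k (GA k N) (GA k N)).flip 1))
    rw [hC, hD, hR, map_sum]
    simp only [Algebra.TensorProduct.map_tmul, AlgHom.coe_id, id_eq,
      delta_e hq1 hq2 Δ hΔ, tmul_sum]
    refine Eq.trans ?_ (Finset.sum_mul_sum univ univ _ _).symm
    have h : ∀ a b : ZMod N,
        (Kp k N a ⊗ₜ[k] ((1 : GA k N) ⊗ₜ[k] eId k N q a)) *
          (Kp k N b ⊗ₜ[k] (eId k N q b ⊗ₜ[k] (1 : GA k N)))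
        = (Kp k N a * Kp k N b) ⊗ₜ[k] (eId k N q b ⊗ₜ[k] eId k N q a) := by
      intro a b
      rw [Algebra.TensorProduct.tmul_mul_tmul, Algebra.TensorProduct.tmul_mul_tmul,
        one_mul, mul_one]
    simp only [h]
    rw [Finset.sum_comm]
    conv_rhs => rw [Finset.sum_comm]
    apply Finset.sum_congr rfl
    intro b _
    apply Fintype.sum_equiv (Equiv.subRight b)
      (fun a => Kp k N a ⊗ₜ[k] (eId k N q b ⊗ₜ[k] eId k N q (a - b)))
      (fun c => (Kp k N c * Kp k N b) ⊗ₜ[k] (eId k N q b ⊗ₜ[k] eId k N q c))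
    intro a
    rw [Equiv.subRight_apply, ← Kp_add, sub_add_cancel]


end
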